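/- If H : Δ → ℝ satisfies generalized Shannon additivity with parameter α = 1, then H(p₁,p₂) = H(p₂,p₁) for all (p₁,p₂) ∈ Δ₂. -/

import Mathlib

open Real

/-- A finite stochastic vector: nonnegative entries summing to 1. -/
def IsStochastic (l : List ℝ) : Prop :=
  (∀ x ∈ l, 0 ≤ x) ∧ l.sum = 1

/-- Generalized Shannon additivity with parameter `α`: merging two adjacent
components of a stochastic vector. Powers are real powers (`rpow`). -/
def GSA (α : ℝ) (H : List ℝ → ℝ) : Prop :=
  ∀ (l₁ l₂ : List ℝ) (a b : ℝ), IsStochastic (l₁ ++ a :: b :: l₂) → 0 < a + b →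
    H (l₁ ++ a :: b :: l₂) =
      H (l₁ ++ (a + b) :: l₂) + (a + b) ^ α * H [a / (a + b), b / (a + b)]

/-- The asymmetry function  `F x = H [x, 1-x] - H [1-x, x]`. -/
noncomputable def Ff (H : List ℝ → ℝ) (x : ℝ) : ℝ := H [x, 1 - x] - H [1 - x, x]

section Aux
variable (H : List ℝ → ℝ) (hH : GSA 1 H)

lemma stoch3 {a b c : ℝ} (ha : 0 ≤ a) (hb : 0 ≤ b) (hc : 0 ≤ c) (hsum : a + b + c = 1) :
    IsStochastic [a, b, c] := by
  constructor
  · intro x hx; simp at hx; rcases hx with h|h|h <;> subst h <;> assumption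
  · simp; linarith

include hH in
lemma gsa12 {a b c : ℝ} (ha : 0 ≤ a) (hb : 0 ≤ b) (hc : 0 ≤ c) (hsum : a + b + c = 1)
    (hab : 0 < a + b) :
    H [a, b, c] = H [a + b, c] + (a + b) * H [a / (a + b), b / (a + b)] := by
  have := hH [] [c] a b (by simpa using stoch3 ha hb hc hsum) hab
  simpa [rpow_one] using this

include hH in
lemma gsa23 {a b c : ℝ} (ha : 0 ≤ a) (hb : 0 ≤ b) (hc : 0 ≤ c) (hsum : a + b + c = 1)
    (hbc : 0 < b + c) :
    H [a, b, c] = H [a, b + c] + (b + c) * H [b / (b + c), c / (b + c)] := by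
  have := hH [a] [] b c (by simpa using stoch3 ha hb hc hsum) hbc
  simpa [rpow_one] using this

include hH in
lemma hzero01 : H [0, 1] = 0 := by
  have e1 := gsa12 H hH (a := 0) (b := 1/2) (c := 1/2) le_rfl (by norm_num) (by norm_num)
    (by norm_num) (by norm_num)
  have e2 := gsa23 H hH (a := 0) (b := 1/2) (c := 1/2) le_rfl (by norm_num) (by norm_num)
    (by norm_num) (by norm_num)
  norm_num at e1 e2
  linarith

include hH in
lemma hzero10 : H [1, 0] = 0 := by
  have e1 := gsa12 H hH (a := 1/2) (b := 1/2) (c := 0) (by norm_num) (by norm_num) le_rfl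
    (by norm_num) (by norm_num)
  have e2 := gsa23 H hH (a := 1/2) (b := 1/2) (c := 0) (by norm_num) (by norm_num) le_rfl
    (by norm_num) (by norm_num)
  norm_num at e1 e2
  linarith

include hH in
lemma keyC {a b c : ℝ} (ha : 0 ≤ a) (hb : 0 ≤ b) (hc : 0 ≤ c) (hsum : a + b + c = 1)
    (hab : 0 < a + b) (hbc : 0 < b + c) :
    (a + b) * Ff H (a / (a + b)) + (b + c) * Ff H (c / (b + c)) = Ff H a + Ff H c := by
  have hsum' : c + b + a = 1 := by linarith
  have e1 := gsa12 H hH ha hb hc hsum hab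
  have e2 := gsa23 H hH ha hb hc hsum hbc
  have e3 := gsa12 H hH hc hb ha hsum' (by linarith)
  have e4 := gsa23 H hH hc hb ha hsum' (by linarith)
  have hbc' : (b : ℝ) + c = 1 - a := by linarith
  have hba' : (b : ℝ) + a = 1 - c := by linarith
  have hdiv1 : b / (a + b) = 1 - a / (a + b) := by
    field_simp; ring
  have hbc0 : (b:ℝ) + c ≠ 0 := hbc.ne'
  have hdiv2 : b / (b + c) = 1 - c / (b + c) := by
    field_simp; ring
  have hcb0 : (c:ℝ) + b ≠ 0 := by linarith
  have hdiv3 : b / (c + b) = 1 - c / (c + b) := by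
    field_simp; ring
  have hba0 : (b:ℝ) + a ≠ 0 := by linarith
  have hdiv4 : b / (b + a) = 1 - a / (b + a) := by
    field_simp; ring
  rw [show H [a+b, c] = H [1-c, c] by rw [show a+b = 1-c by linarith],
      show H [a/(a+b), b/(a+b)] = H [a/(a+b), 1 - a/(a+b)] by rw [hdiv1]] at e1
  rw [show H [a, b+c] = H [a, 1-a] by rw [hbc'],
      show H [b/(b+c), c/(b+c)] = H [1 - c/(b+c), c/(b+c)] by rw [hdiv2]] at e2
  rw [show H [c+b, a] = H [1-a, a] by rw [show c+b = 1-a by linarith],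
      show H [c/(c+b), b/(c+b)] = H [c/(b+c), 1 - c/(b+c)] by
        rw [hdiv3, show c+b = b+c by ring]] at e3
  rw [show H [c, b+a] = H [c, 1-c] by rw [hba'],
      show H [b/(b+a), a/(b+a)] = H [1 - a/(a+b), a/(a+b)] by
        rw [hdiv4, show b+a = a+b by ring]] at e4
  rw [show c+b = b+c by ring] at e3
  rw [show b+a = a+b by ring] at e4
  simp only [Ff]
  linear_combination e2 - e1 + e4 - e3

lemma Fanti (x : ℝ) : Ff H (1 - x) = - Ff H x := by
  simp only [Ff, sub_sub_cancel]; ring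

lemma Fhalf : Ff H (1/2 : ℝ) = 0 := by
  have := Fanti H (1/2); norm_num at this; linarith

include hH in
lemma T3 {a b c : ℝ} (ha : 0 < a) (hb : 0 < b) (hc : 0 < c) (hsum : a + b + c = 1) :
    Ff H a + Ff H b + Ff H c = 0 := by
  have hab : (0:ℝ) < a + b := by linarith
  have hac : (0:ℝ) < a + c := by linarith
  have hbc : (0:ℝ) < b + c := by linarith
  have k1 := keyC H hH ha.le hb.le hc.le hsum hab hbc
  have k2 := keyC H hH ha.le hc.le hb.le (by linarith) hac (by linarith)
  have k3 := keyC H hH hb.le ha.le hc.le (by linarith) (by linarith) hac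
  have n2 : Ff H (b / (c + b)) = - Ff H (c / (b + c)) := by
    rw [show b / (c + b) = 1 - c / (b + c) by
      rw [add_comm c b]; field_simp; ring, Fanti]
  have n3a : Ff H (b / (b + a)) = - Ff H (a / (a + b)) := by
    rw [show b / (b + a) = 1 - a / (a + b) by
      rw [add_comm b a]; field_simp; ring, Fanti]
  have n3b : Ff H (c / (a + c)) = - Ff H (a / (a + c)) := by
    rw [show c / (a + c) = 1 - a / (a + c) by field_simp; ring, Fanti]
  rw [n2, show c + b = b + c by ring] at k2
  rw [n3a, n3b, show b + a = a + b by ring] at k3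
  linarith

include hH in
lemma Fadd {x y : ℝ} (hx : 0 < x) (hy : 0 < y) (hxy : x + y < 1) :
    Ff H (x + y) = Ff H x + Ff H y := by
  have h := T3 H hH hx hy (c := 1 - x - y) (by linarith) (by ring)
  have h2 : Ff H (1 - x - y) = - Ff H (x + y) := by
    rw [show 1 - x - y = 1 - (x + y) by ring, Fanti]
  linarith

include hH in
lemma Fdbl {x : ℝ} (hx : 0 < x) (h2 : 2 * x < 1) : Ff H (2 * x) = 2 * Ff H x := by
  have h := Fadd H hH hx hx (by linarith)
  rw [show x + x = 2 * x by ring] at h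
  linarith

include hH in
lemma FE3 {a : ℝ} (h0 : 0 < a) (h2 : a ≤ 1/2) : Ff H a = (1 - a) * Ff H (a / (1 - a)) := by
  have k := keyC H hH h0.le (b := 1 - 2*a) (c := a) (by linarith) h0.le (by ring)
    (by linarith) (by linarith)
  rw [show a + (1 - 2*a) = 1 - a by ring, show 1 - 2*a + a = 1 - a by ring] at k
  linarith

include hH in
lemma FE3' {p : ℝ} (h0 : 0 < p) (h1 : p < 1) : Ff H p = (1 + p) * Ff H (p / (1 + p)) := by
  have hp : (0:ℝ) < 1 + p := by linarith
  have k := FE3 H hH (a := p / (1 + p)) (by positivity) (by rw [div_le_iff₀ hp]; linarith)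
  rw [show 1 - p / (1 + p) = 1 / (1 + p) by field_simp; ring] at k
  rw [show p / (1 + p) / (1 / (1 + p)) = p by field_simp] at k
  rw [k]; field_simp

include hH in
lemma Fsq {p : ℝ} (h0 : 0 < p) (h1 : p < 1) : Ff H (p^2) = 2 * p * Ff H p := by
  have hq : (0:ℝ) < 1 - p := by linarith
  have hp1 : (0:ℝ) < 1 + p := by linarith
  have k := keyC H hH (a := p^2) (b := p * (1 - p)) (c := 1 - p)
    (by positivity) (by positivity) hq.le (by ring) (by nlinarith) (by nlinarith)
  rw [show p^2 + p * (1 - p) = p by ring] at k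
  rw [show p^2 / p = p by field_simp] at k
  rw [show (1 - p) / (p * (1 - p) + (1 - p)) = 1 / (1 + p) by
    rw [show p * (1 - p) + (1 - p) = (1 - p) * (1 + p) by ring]; field_simp] at k
  have hfe : Ff H (1 / (1 + p)) = -(Ff H p / (1 + p)) := by
    rw [show (1:ℝ) / (1 + p) = 1 - p / (1 + p) by field_simp; ring, Fanti, FE3' H hH h0 h1]
    field_simp
  have hq2 : (p * (1 - p) + (1 - p)) * Ff H (1 / (1 + p)) = -((1 - p) * Ff H p) := by
    rw [hfe, show p * (1 - p) + (1 - p) = (1 - p) * (1 + p) by ring]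
    field_simp
  rw [hq2, Fanti] at k
  linarith

include hH in
lemma Fmul {x y : ℝ} (hx : 0 < x) (hy : 0 < y) (hxy : x + y < 1) :
    Ff H (x * y) = x * Ff H y + y * Ff H x := by
  have hx1 : x < 1 := by linarith
  have hy1 : y < 1 := by linarith
  have hs1 : (x + y)^2 < 1 := by nlinarith
  have s1 := Fsq H hH (by linarith : (0:ℝ) < x + y) (by linarith)
  have a1 := Fadd H hH hx hy hxy
  have e : Ff H ((x + y)^2) = Ff H (x^2) + Ff H (2*(x*y) + y^2) := by
    rw [show (x+y)^2 = x^2 + (2*(x*y) + y^2) by ring]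
    exact Fadd H hH (by positivity) (by positivity) (by nlinarith)
  have e2 : Ff H (2*(x*y) + y^2) = Ff H (2*(x*y)) + Ff H (y^2) :=
    Fadd H hH (by positivity) (by positivity) (by nlinarith)
  have e3 : Ff H (2*(x*y)) = 2 * Ff H (x*y) := Fdbl H hH (by positivity) (by nlinarith)
  have e4 := Fsq H hH hx hx1
  have e5 := Fsq H hH hy hy1
  linear_combination (1/2)*s1 - (1/2)*e - (1/2)*e2 - (1/2)*e3 - (1/2)*e4 - (1/2)*e5 + (x+y)*a1

include hH in
lemma Fwin {y : ℝ} (h1 : 1/4 < y) (h2 : y < 1/2) : Ff H y = 0 := by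
  have hy : (0:ℝ) < y := by linarith
  have hy4 : (0:ℝ) < 4 * y := by linarith
  set A : ℝ := (4*y - 1) / (4*y) with hA
  have hA0 : 0 < A := by apply div_pos <;> linarith
  have hA2 : A ≤ 1/2 := by rw [hA, div_le_iff₀ hy4]; linarith
  have hE3 := FE3 H hH hA0 hA2
  have h1A : 1 - A = 1 / (4*y) := by rw [hA]; field_simp; ring
  have hAA : A / (1 - A) = 4*y - 1 := by rw [h1A, hA]; field_simp
  rw [hAA, h1A] at hE3
  have hd1 : Ff H (4*y - 1) = 2 * Ff H ((4*y-1)/2) := by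
    have := Fdbl H hH (x := (4*y-1)/2) (by linarith) (by linarith)
    rw [show 2*((4*y-1)/2) = 4*y - 1 by ring] at this
    linarith
  have hd2 : Ff H ((4*y-1)/2) = 2 * Ff H ((4*y-1)/4) := by
    have := Fdbl H hH (x := (4*y-1)/4) (by linarith) (by linarith)
    rw [show 2*((4*y-1)/4) = (4*y-1)/2 by ring] at this
    linarith
  have hm := Fmul H hH hA0 hy
    (by rw [hA]; rw [div_add' _ _ _ hy4.ne']; rw [div_lt_one hy4]; nlinarith)
  rw [show A * y = (4*y-1)/4 by rw [hA]; field_simp] at hm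
  have hyA : y * Ff H A = (1/4) * Ff H (4*y - 1) := by
    rw [hE3]; field_simp
  have hz : A * Ff H y = 0 := by linarith
  rcases mul_eq_zero.mp hz with h | h
  · exact absurd h hA0.ne'
  · exact h

include hH in
lemma Fbase {p : ℝ} (h1 : 1/4 < p) (h2 : p ≤ 1/2) : Ff H p = 0 := by
  rcases eq_or_lt_of_le h2 with h | h
  · rw [h]; exact Fhalf H
  · exact Fwin H hH h1 h

include hH in
lemma Find : ∀ n : ℕ, ∀ p : ℝ, 0 < p → 1/4 < 2^n * p → 2^n * p ≤ 1/2 → Ff H p = 0 := by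
  intro n
  induction n with
  | zero => intro p hp h1 h2; norm_num at h1 h2; exact Fbase H hH h1 h2
  | succ n ih =>
    intro p hp h1 h2
    have h2n : (2:ℝ) ≤ 2^(n+1) := by
      calc (2:ℝ) = 2^1 := by norm_num
      _ ≤ 2^(n+1) := pow_le_pow_right₀ one_le_two (by omega)
    have hp2 : 2 * p < 1 := by nlinarith
    have hz := ih (2*p) (by linarith) (by rw [show 2^n * (2*p) = 2^(n+1) * p by ring]; exact h1)
      (by rw [show 2^n * (2*p) = 2^(n+1) * p by ring]; exact h2)
    have := Fdbl H hH hp hp2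
    rw [hz] at this
    linarith

include hH in
lemma Fzero_half : ∀ p : ℝ, 0 < p → p ≤ 1/2 → Ff H p = 0 := by
  intro p hp h
  have h4p : (0:ℝ) < 4*p := by linarith
  have hex : ∃ n : ℕ, 1/4 < 2^n * p := by
    obtain ⟨n, hn⟩ := pow_unbounded_of_one_lt (1/(4*p) : ℝ) one_lt_two
    rw [div_lt_iff₀ h4p] at hn
    exact ⟨n, by nlinarith⟩
  classical
  have hn := Nat.find_spec hex
  have hle : 2^(Nat.find hex) * p ≤ 1/2 := by
    cases' h0 : Nat.find hex with m
    · norm_num; exact h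
    · have hm : ¬ (1/4 < 2^m * p) := Nat.find_min hex (by omega)
      push_neg at hm
      rw [pow_succ]
      nlinarith
  exact Find H hH (Nat.find hex) p hp hn hle

include hH in
lemma Fzero : ∀ p : ℝ, 0 < p → p < 1 → Ff H p = 0 := by
  intro p hp hp1
  rcases le_or_gt p (1/2) with h | h
  · exact Fzero_half H hH p hp h
  · have h0 : Ff H (1 - p) = 0 := Fzero_half H hH (1 - p) (by linarith) (by linarith)
    have := Fanti H (1 - p)
    rw [sub_sub_cancel] at this
    rw [this, h0, neg_zero]

end Aux

theorem stmt_3 (H : List ℝ → ℝ) (hH : GSA 1 H)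
    (p₁ p₂ : ℝ) (h₁ : 0 ≤ p₁) (h₂ : 0 ≤ p₂) (hsum : p₁ + p₂ = 1) :
    H [p₁, p₂] = H [p₂, p₁] := by
  have hp2 : p₂ = 1 - p₁ := by linarith
  subst hp2
  rcases eq_or_lt_of_le h₁ with h0 | h0
  · rw [← h0]; norm_num
    rw [hzero01 H hH, hzero10 H hH]
  · rcases eq_or_lt_of_le (by linarith : p₁ ≤ 1) with h1 | h1
    · rw [h1]; norm_num
      rw [hzero01 H hH, hzero10 H hH]
    · have := Fzero H hH p₁ h0 h1
      simp only [Ff] at this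
      linarith
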